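/- Let X be a complete CAT(0) space and f, g : X → (−∞, ∞] convex, lsc and proper; set Φ(x,y) = f(x) + g(y) + (1/(2λ))d(x,y)² for a fixed λ > 0. If x* is a fixed point of J_λ^f ∘ J_λ^g and y* = J_λ^g(x*), then (x*, y*) minimizes Φ over X × X. -/

import Mathlib

open Filter Topology Metric Set

/-- A (chosen) geodesic bicombing witnessing that `X` is a geodesic space:
`geo x y t` is the point at parameter fraction `t ∈ [0,1]` on a geodesic from `x` to `y`. -/
structure Geodesic (X : Type*) [MetricSpace X] where
  geo : X → X → ℝ → X
  geo_zero : ∀ x y, geo x y 0 = x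
  geo_one : ∀ x y, geo x y 1 = y
  geo_dist : ∀ x y : X, ∀ s ∈ Set.Icc (0:ℝ) 1, ∀ t ∈ Set.Icc (0:ℝ) 1,
    dist (geo x y s) (geo x y t) = |s - t| * dist x y

/-- The CN (Bruhat–Tits) inequality characterizing CAT(0) among geodesic spaces. -/
def CAT0 (X : Type*) [MetricSpace X] : Prop :=
  ∀ x y z m : X, dist x m = dist x y / 2 → dist y m = dist x y / 2 →
    dist z m ^ 2 ≤ dist z x ^ 2 / 2 + dist z y ^ 2 / 2 - dist x y ^ 2 / 4

/-- Extract a real inequality from an EReal inequality with finite endpoints. -/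
lemma toReal_ineq {a b : EReal} {r s : ℝ} (ha : a ≠ ⊥) (ha' : a ≠ ⊤) (hb : b ≠ ⊥)
    (hb' : b ≠ ⊤) (h : a + (r:EReal) ≤ b + (s:EReal)) : a.toReal + r ≤ b.toReal + s := by
  rw [← EReal.coe_toReal ha' ha, ← EReal.coe_toReal hb' hb] at h
  exact_mod_cast h

lemma midpt_dist {X : Type*} [MetricSpace X] (G : Geodesic X) (p q : X) :
    dist p (G.geo p q (1/2)) = dist p q / 2 ∧ dist q (G.geo p q (1/2)) = dist p q / 2 := by
  have h1 := G.geo_dist p q 0 (by norm_num) (1/2) (by norm_num)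
  have h2 := G.geo_dist p q 1 (by norm_num) (1/2) (by norm_num)
  rw [G.geo_zero] at h1
  rw [G.geo_one] at h2
  have e : |(0:ℝ) - 1/2| = 1/2 := by rw [abs_sub_comm, sub_zero]; norm_num
  have e' : |(1:ℝ) - 1/2| = 1/2 := by norm_num
  rw [e] at h1; rw [e'] at h2
  constructor
  · rw [h1]; ring
  · rw [h2]; ring

/-- The quadrilateral inequality: sum of squared diagonals ≤ sum of squared sides. -/
lemma quad_ineq {X : Type*} [MetricSpace X] (G : Geodesic X) (hX : CAT0 X) (p q r s : X) :
    dist p r ^ 2 + dist q s ^ 2 ≤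
      dist p q ^ 2 + dist q r ^ 2 + dist r s ^ 2 + dist s p ^ 2 := by
  obtain ⟨hq, hs⟩ := midpt_dist G q s
  set m := G.geo q s (1/2) with hm
  have h1 := hX q s p m hq hs
  have h2 := hX q s r m hq hs
  have htri := dist_triangle p m r
  have e2 : dist r q ^ 2 = dist q r ^ 2 := by rw [dist_comm]
  have e3 : dist p s ^ 2 = dist s p ^ 2 := by rw [dist_comm]
  have e4 : dist m r = dist r m := dist_comm m r
  rw [e4] at htri
  have ht2 : dist p r ^ 2 ≤ (dist p m + dist r m) ^ 2 :=
    pow_le_pow_left₀ dist_nonneg htri 2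
  have ht3 : (dist p m + dist r m) ^ 2 ≤ 2 * dist p m ^ 2 + 2 * dist r m ^ 2 := by
    nlinarith [sq_nonneg (dist p m - dist r m)]
  linarith

lemma step_arith (A B M dJx dxz dJz dxm s c : ℝ) (hc : 0 ≤ c)
    (h1 : A + c*dJx^2 ≤ M + (c*dxm^2 - (1-s)*c*(dJz/2)^2))
    (h2 : M ≤ (1/2)*A + (1/2)*B)
    (h3 : dxm^2 ≤ dJx^2/2 + dxz^2/2 - dJz^2/4) :
    A + c*dJx^2 ≤ B + (c*dxz^2 - (1-s/2)*c*dJz^2) := by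
  nlinarith [mul_le_mul_of_nonneg_left h3 hc]

/-- The strengthened resolvent inequality, with defect coefficient `1 - (1/2)^n`. -/
lemma strong_res {X : Type*} [MetricSpace X] (G : Geodesic X) (hX : CAT0 X)
    (f : X → EReal) (hf_ne_bot : ∀ x, f x ≠ ⊥)
    (hf_conv : ∀ x y : X, ∀ t ∈ Set.Icc (0:ℝ) 1,
      f (G.geo x y t) ≤ ((1 - t : ℝ) : EReal) * f x + ((t : ℝ) : EReal) * f y)
    (lam : ℝ) (hlam : 0 < lam) (Jf : X → X)
    (hJf : ∀ x z : X,
      f (Jf x) + ((1 / (2 * lam) * dist (Jf x) x ^ 2 : ℝ) : EReal) ≤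
        f z + ((1 / (2 * lam) * dist x z ^ 2 : ℝ) : EReal)) :
    ∀ n : ℕ, ∀ x z : X,
      f (Jf x) + ((1 / (2 * lam) * dist (Jf x) x ^ 2 : ℝ) : EReal) ≤
        f z + ((1 / (2 * lam) * dist x z ^ 2
          - (1 - (1/2)^n) * (1 / (2 * lam)) * dist (Jf x) z ^ 2 : ℝ) : EReal) := by
  set c : ℝ := 1 / (2 * lam) with hc
  have hc0 : 0 ≤ c := by positivity
  intro n
  induction n with
  | zero => intro x z; simpa using hJf x z
  | succ n ih =>
    intro x z
    by_cases hzt : f z = ⊤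
    · rw [hzt, EReal.top_add_coe]; exact le_top
    -- finiteness of f (Jf x)
    have hJt : f (Jf x) ≠ ⊤ := by
      have h := hJf x z
      have hle : f (Jf x) ≤ f z + ((c * dist x z ^ 2 : ℝ) : EReal) := by
        refine le_trans ?_ h
        nth_rewrite 1 [← add_zero (f (Jf x))]
        exact add_le_add le_rfl (by exact_mod_cast (by positivity : (0:ℝ) ≤ c * dist (Jf x) x ^2))
      exact (hle.trans_lt (EReal.add_lt_top hzt (EReal.coe_ne_top _))).ne
    obtain ⟨hm1, hm2⟩ := midpt_dist G (Jf x) z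
    set m := G.geo (Jf x) z (1/2) with hmdef
    -- convexity at the midpoint
    have hconv := hf_conv (Jf x) z (1/2) (by norm_num)
    rw [← hmdef] at hconv
    have hmt : f m ≠ ⊤ := by
      refine (hconv.trans_lt ?_).ne
      rw [← EReal.coe_toReal hJt (hf_ne_bot _), ← EReal.coe_toReal hzt (hf_ne_bot _)]
      rw [show ((1 - 1/2 : ℝ) : EReal) * ((f (Jf x)).toReal : EReal) +
          ((1/2 : ℝ) : EReal) * ((f z).toReal : EReal)
          = (((1 - 1/2) * (f (Jf x)).toReal + (1/2) * (f z).toReal : ℝ) : EReal) by push_cast; ring]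
      exact (EReal.coe_ne_top _).lt_top
    -- real versions
    have hconvR : (f m).toReal ≤ (1/2) * (f (Jf x)).toReal + (1/2) * (f z).toReal := by
      rw [← EReal.coe_toReal hJt (hf_ne_bot _), ← EReal.coe_toReal hzt (hf_ne_bot _),
        ← EReal.coe_toReal hmt (hf_ne_bot _)] at hconv
      have : ((f m).toReal : EReal) ≤
          (((1 - 1/2) * (f (Jf x)).toReal + (1/2) * (f z).toReal : ℝ) : EReal) := by
        refine hconv.trans_eq ?_; push_cast; ring
      have := EReal.coe_le_coe_iff.mp this
      linarith
    have hih := ih x m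
    have hihR := toReal_ineq (hf_ne_bot _) hJt (hf_ne_bot _) hmt hih
    rw [hm1] at hihR
    have hcn := hX (Jf x) z x m hm1 hm2
    -- assemble
    have key : (f (Jf x)).toReal + c * dist (Jf x) x ^ 2 ≤
        (f z).toReal + (c * dist x z ^ 2
          - (1 - ((1/2:ℝ))^n / 2) * c * dist (Jf x) z ^ 2) := by
      have hd1 : dist x (Jf x) = dist (Jf x) x := dist_comm _ _
      refine step_arith _ _ ((f m).toReal) _ _ _ (dist x m) ((1/2)^n) c hc0 ?_ hconvR ?_
      · linarith [hihR]
      · rw [hd1] at hcn; linarith [hcn]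
    rw [← EReal.coe_toReal hJt (hf_ne_bot _), ← EReal.coe_toReal hzt (hf_ne_bot _)]
    have : ((1:ℝ)/2)^(n+1) = ((1/2:ℝ))^n/2 := by ring
    rw [this]
    exact_mod_cast key

/-- If `x*` is a fixed point of `J_λ^f ∘ J_λ^g` and `y* = J_λ^g x*`, then `(x*, y*)`
minimizes `Φ(x,y) = f x + g y + (1/(2λ)) d(x,y)²` over `X × X`. -/
theorem fixed_point_minimizes_Phi {X : Type*} [MetricSpace X] [CompleteSpace X]
    (G : Geodesic X) (hX : CAT0 X)
    (f g : X → EReal)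
    (hf_ne_bot : ∀ x, f x ≠ ⊥) (hf_proper : ∃ x, f x ≠ ⊤)
    (hg_ne_bot : ∀ x, g x ≠ ⊥) (hg_proper : ∃ x, g x ≠ ⊤)
    (hf_conv : ∀ x y : X, ∀ t ∈ Set.Icc (0:ℝ) 1,
      f (G.geo x y t) ≤ ((1 - t : ℝ) : EReal) * f x + ((t : ℝ) : EReal) * f y)
    (hg_conv : ∀ x y : X, ∀ t ∈ Set.Icc (0:ℝ) 1,
      g (G.geo x y t) ≤ ((1 - t : ℝ) : EReal) * g x + ((t : ℝ) : EReal) * g y)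
    (hf_lsc : LowerSemicontinuous f) (hg_lsc : LowerSemicontinuous g)
    (lam : ℝ) (hlam : 0 < lam)
    (Jf Jg : X → X)
    (hJf : ∀ x z : X,
      f (Jf x) + ((1 / (2 * lam) * dist (Jf x) x ^ 2 : ℝ) : EReal) ≤
        f z + ((1 / (2 * lam) * dist x z ^ 2 : ℝ) : EReal))
    (hJg : ∀ x z : X,
      g (Jg x) + ((1 / (2 * lam) * dist (Jg x) x ^ 2 : ℝ) : EReal) ≤
        g z + ((1 / (2 * lam) * dist x z ^ 2 : ℝ) : EReal))
    (xs : X) (hxs : Jf (Jg xs) = xs) (ys : X) (hys : ys = Jg xs) :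
    ∀ x y : X,
      f xs + g ys + ((1 / (2 * lam) * dist xs ys ^ 2 : ℝ) : EReal) ≤
        f x + g y + ((1 / (2 * lam) * dist x y ^ 2 : ℝ) : EReal) := by
  intro x y
  set c : ℝ := 1 / (2 * lam) with hc
  have hc0 : 0 < c := by positivity
  have hfix : Jf ys = xs := by rw [hys]; exact hxs
  have hgys : Jg xs = ys := hys.symm
  by_cases hfx : f x = ⊤
  · rw [hfx, EReal.top_add_of_ne_bot (hg_ne_bot y), EReal.top_add_coe]; exact le_top
  by_cases hgy : g y = ⊤
  · rw [hgy, EReal.add_top_of_ne_bot (hf_ne_bot x), EReal.top_add_coe]; exact le_top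
  -- finiteness of f xs, g ys
  have hfxs : f xs ≠ ⊤ := by
    have h := hJf ys x
    rw [hfix] at h
    have hle : f xs ≤ f x + ((c * dist ys x ^ 2 : ℝ) : EReal) := by
      refine le_trans ?_ h
      nth_rewrite 1 [← add_zero (f xs)]
      exact add_le_add le_rfl (by exact_mod_cast (by positivity : (0:ℝ) ≤ c * dist xs ys ^2))
    exact (hle.trans_lt (EReal.add_lt_top hfx (EReal.coe_ne_top _))).ne
  have hgys' : g ys ≠ ⊤ := by
    have h := hJg xs y
    rw [hgys] at h
    have hle : g ys ≤ g y + ((c * dist xs y ^ 2 : ℝ) : EReal) := by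
      refine le_trans ?_ h
      nth_rewrite 1 [← add_zero (g ys)]
      exact add_le_add le_rfl (by exact_mod_cast (by positivity : (0:ℝ) ≤ c * dist ys xs ^2))
    exact (hle.trans_lt (EReal.add_lt_top hgy (EReal.coe_ne_top _))).ne
  set A := (f xs).toReal
  set B := (g ys).toReal
  set P := (f x).toReal
  set Q := (g y).toReal
  -- the family of strengthened inequalities
  have key : ∀ n : ℕ, A + B + c * dist xs ys ^ 2 ≤ P + Q + c * dist x y ^ 2
      + ((1/2:ℝ))^n * (c * (dist xs x ^ 2 + dist ys y ^ 2)) := by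
    intro n
    have h1 := strong_res G hX f hf_ne_bot hf_conv lam hlam Jf hJf n ys x
    rw [hfix] at h1
    have h2 := strong_res G hX g hg_ne_bot hg_conv lam hlam Jg hJg n xs y
    rw [hgys] at h2
    have h1R := toReal_ineq (hf_ne_bot _) hfxs (hf_ne_bot _) hfx h1
    have h2R := toReal_ineq (hg_ne_bot _) hgys' (hg_ne_bot _) hgy h2
    have hq := quad_ineq G hX ys xs x y
    have hqc := mul_le_mul_of_nonneg_left hq hc0.le
    have e1 : dist ys xs = dist xs ys := dist_comm _ _
    have e2 : dist y ys = dist ys y := dist_comm _ _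
    rw [← hc] at h1R h2R
    rw [e1] at h2R hqc
    rw [e2] at hqc
    nlinarith [h1R, h2R, hqc]
  -- pass to the limit
  have main : A + B + c * dist xs ys ^ 2 ≤ P + Q + c * dist x y ^ 2 := by
    refine le_of_forall_pos_le_add fun ε hε => ?_
    have hK0 : (0:ℝ) ≤ c * (dist xs x ^ 2 + dist ys y ^ 2) := by positivity
    rcases eq_or_lt_of_le hK0 with hK1 | hK1
    · have h0 := key 0
      simp only [pow_zero, one_mul] at h0
      linarith
    · obtain ⟨n, hn⟩ := exists_pow_lt_of_lt_one (div_pos hε hK1) (by norm_num : (1/2:ℝ) < 1)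
      have h2 := (lt_div_iff₀ hK1).mp hn
      linarith [key n]
  -- back to EReal
  rw [← EReal.coe_toReal hfxs (hf_ne_bot _), ← EReal.coe_toReal hgys' (hg_ne_bot _),
    ← EReal.coe_toReal hfx (hf_ne_bot _), ← EReal.coe_toReal hgy (hg_ne_bot _)]
  exact_mod_cast main
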